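/- Let G(u) = u + u^2 - 2u^3, H = G', h2(x) = (1/6)(1+√(7-6x)), and let ρ < 1/6, ρ* = (1-2ρ)/4 < λ ≤ 1. If H(λ) < v < H(ρ*) and θ = h2(v), then G(θ) - vθ = max{G(α) - vα : α ∈ [ρ, λ]}, and the maximizer is unique. -/
import Mathlib


theorem stmt_10 (G H h2 : ℝ → ℝ) (hG : ∀ u, G u = u + u^2 - 2*u^3)
    (hH : ∀ u, H u = 1 + 2*u - 6*u^2)
    (hh2 : ∀ x, h2 x = (1/6) * (1 + Real.sqrt (7 - 6*x)))
    (ρ lam v : ℝ) (hρ0 : 0 ≤ ρ) (hρ : ρ < 1/6)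
    (hstar : (1 - 2*ρ)/4 < lam) (hlam : lam ≤ 1)
    (hv1 : H lam < v) (hv2 : v < H ((1 - 2*ρ)/4)) :
    (∀ α ∈ Set.Icc ρ lam, G α - v*α ≤ G (h2 v) - v * h2 v) ∧
    (∀ α ∈ Set.Icc ρ lam, G α - v*α = G (h2 v) - v * h2 v → α = h2 v) := by
  rw [hH] at hv1 hv2
  set s := Real.sqrt (7 - 6*v) with hs
  have h7 : (0:ℝ) ≤ 7 - 6*v := by nlinarith [sq_nonneg (1 - 6*ρ)]
  have hs2 : s^2 = 7 - 6*v := Real.sq_sqrt h7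
  have hsnn : 0 ≤ s := Real.sqrt_nonneg _
  set θ := h2 v with hθdef
  have hθ : θ = (1 + s)/6 := by rw [hθdef, hh2]; ring
  -- v = H θ
  have hvθ : v = 1 + 2*θ - 6*θ^2 := by rw [hθ]; nlinarith [hs2]
  -- s > (1-6ρ)/2, hence θ > (1-2ρ)/4
  have hsgt : (1 - 6*ρ)/2 < s := by nlinarith [hs2, hsnn, sq_nonneg (s - (1-6*ρ)/2)]
  have hθgt : (1 - 2*ρ)/4 < θ := by rw [hθ]; linarith
  constructor
  · rintro α ⟨hα1, hα2⟩
    rw [hG, hG]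
    have hpos : 0 < 4*θ + 2*α - 1 := by linarith
    nlinarith [mul_nonneg (sq_nonneg (θ - α)) hpos.le, hvθ]
  · rintro α ⟨hα1, hα2⟩ heq
    rw [hG, hG] at heq
    have hpos : 0 < 4*θ + 2*α - 1 := by linarith
    have h0 : (θ - α)^2 * (4*θ + 2*α - 1) = 0 := by linear_combination (θ - α) * hvθ - heq
    have := mul_eq_zero.mp h0
    rcases this with h | h
    · have := pow_eq_zero_iff (n := 2) (by norm_num) |>.mp h
      linarith
    · linarith
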